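/- Let K ≥ 4 and let U1, …, U_{K−1}, X, Y1, …, Y_K be finitely-valued random variables forming the Markov chain U1 → U2 → ⋯ → U_{K−1} → X → Y_K → ⋯ → Y1; set U_K := X, a_1 = I(U1;Y1), a_j = I(U_j;Y_j|U_{j−1}) for 2 ≤ j ≤ K, and b_{j,l} = I(U_j;Y_{l−2}|U_{l−2}). Then for every 3 ≤ k ≤ K−1 and all nonnegative reals R1, …, R_{k+1}, R_{k+1,2}: (R1, …, R_{k+1}, R_{k+1,2}) ∈ 𝓡_{k+1} if and only if there exist nonnegative reals R_{k,2} and R_{k+1,1} with R_{k+1} = R_{k,2} + R_{k+1,1} such that (R1, …, R_k, R_{k,2}) ∈ 𝓡_k, R_{k+1,1} + R_{k+1,2} ≤ a_{k+1}, and ∑_{i=j}^{k+1} R_i + R_{k+1,2} ≤ (∑_{i=j−1}^{k+1} a_i) − b_{k+1,j} for all 3 ≤ j ≤ k+2. -/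

import Mathlib

open scoped BigOperators Classical

noncomputable section

namespace BRSec

variable {Ω : Type*} [Fintype Ω]

def prb (p : Ω → ℝ) {α : Type*} (X : Ω → α) (a : α) : ℝ :=
  ∑ ω, if X ω = a then p ω else 0

def IsPMF (p : Ω → ℝ) : Prop :=
  (∀ ω, 0 ≤ p ω) ∧ ∑ ω, p ω = 1

def H (p : Ω → ℝ) {α : Type*} [Fintype α] (X : Ω → α) : ℝ :=
  ∑ a, Real.negMulLog (prb p X a)

def MI (p : Ω → ℝ) {α β : Type*} [Fintype α] [Fintype β] (X : Ω → α) (Y : Ω → β) : ℝ :=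
  H p X + H p Y - H p fun ω => (X ω, Y ω)

def CMI (p : Ω → ℝ) {α β γ : Type*} [Fintype α] [Fintype β] [Fintype γ]
    (X : Ω → α) (Y : Ω → β) (Z : Ω → γ) : ℝ :=
  (H p fun ω => (X ω, Z ω)) + (H p fun ω => (Y ω, Z ω))
    - (H p fun ω => (X ω, Y ω, Z ω)) - H p Z

def MarkovTriple (p : Ω → ℝ) {α β γ : Type*} (X : Ω → α) (Y : Ω → β) (Z : Ω → γ) : Prop :=
  ∀ a b c,
    prb p (fun ω => (X ω, Y ω, Z ω)) (a, b, c) * prb p Y b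
      = prb p (fun ω => (X ω, Y ω)) (a, b) * prb p (fun ω => (Y ω, Z ω)) (b, c)

section Lemmas

variable {p : Ω → ℝ}

lemma prb_nonneg (hp : ∀ ω, 0 ≤ p ω) {α} (X : Ω → α) (a : α) : 0 ≤ prb p X a :=
  Finset.sum_nonneg fun ω _ => by split <;> simp [hp ω]

def pInd (p : Ω → ℝ) {α : Type*} (X : Ω → α) (a : α) (ω : Ω) : ℝ :=
  if X ω = a then p ω else 0

lemma prb_eq_sum_pInd {α} (X : Ω → α) (a : α) : prb p X a = ∑ ω, pInd p X a ω := rfl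

lemma prb_congr {α β} {X : Ω → α} {Y : Ω → β} {a : α} {b : β}
    (h : ∀ ω, X ω = a ↔ Y ω = b) : prb p X a = prb p Y b :=
  Finset.sum_congr rfl fun ω _ => if_congr (h ω) rfl rfl

lemma sum_prb {α} [Fintype α] (X : Ω → α) : ∑ a, prb p X a = ∑ ω, p ω := by
  unfold prb
  rw [Finset.sum_comm]
  refine Finset.sum_congr rfl fun ω _ => ?_
  simp

lemma prb_eq_sum_prb {α β} [Fintype β] (S : Ω → α) (T : Ω → β) (s : α) :
    prb p S s = ∑ t, prb p (fun ω => (S ω, T ω)) (s, t) := by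
  unfold prb
  rw [Finset.sum_comm]
  refine Finset.sum_congr rfl fun ω _ => ?_
  by_cases h : S ω = s <;> simp [Prod.ext_iff, h]

lemma prb_pair_le_right (hp : ∀ ω, 0 ≤ p ω) {α β} (S : Ω → α) (T : Ω → β) (s : α) (t : β) :
    prb p (fun ω => (S ω, T ω)) (s, t) ≤ prb p T t := by
  refine Finset.sum_le_sum fun ω _ => ?_
  dsimp only
  split_ifs with h1 h2 h2 <;> simp_all [Prod.ext_iff, hp ω]

lemma prb_pair_le_left (hp : ∀ ω, 0 ≤ p ω) {α β} (S : Ω → α) (T : Ω → β) (s : α) (t : β) :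
    prb p (fun ω => (S ω, T ω)) (s, t) ≤ prb p S s := by
  refine Finset.sum_le_sum fun ω _ => ?_
  dsimp only
  split_ifs with h1 h2 h2 <;> simp_all [Prod.ext_iff, hp ω]

lemma H_comp_equiv {α β} [Fintype α] [Fintype β] (e : α ≃ β) (T : Ω → α) :
    H p (fun ω => e (T ω)) = H p T := by
  unfold H
  rw [← Equiv.sum_comp e (fun b => Real.negMulLog (prb p (fun ω => e (T ω)) b))]
  refine Finset.sum_congr rfl fun a _ => ?_
  congr 1
  exact prb_congr fun ω => by simp [e.apply_eq_iff_eq]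

lemma H_perm3 {α β γ} [Fintype α] [Fintype β] [Fintype γ]
    (S : Ω → α) (T : Ω → β) (V : Ω → γ) :
    H p (fun ω => (S ω, T ω, V ω)) = H p (fun ω => (T ω, S ω, V ω)) := by
  exact H_comp_equiv ⟨fun t => (t.2.1, t.1, t.2.2), fun t => (t.2.1, t.1, t.2.2),
    fun t => rfl, fun t => rfl⟩ (fun ω => (T ω, S ω, V ω))

lemma H_perm4_13 {α β γ δ} [Fintype α] [Fintype β] [Fintype γ] [Fintype δ]
    (S : Ω → α) (T : Ω → β) (V : Ω → γ) (R : Ω → δ) :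
    H p (fun ω => (S ω, T ω, V ω, R ω)) = H p (fun ω => (V ω, T ω, S ω, R ω)) := by
  exact H_comp_equiv ⟨fun t => (t.2.2.1, t.2.1, t.1, t.2.2.2),
    fun t => (t.2.2.1, t.2.1, t.1, t.2.2.2), fun t => rfl, fun t => rfl⟩
    (fun ω => (V ω, T ω, S ω, R ω))

lemma H_perm4_23 {α β γ δ} [Fintype α] [Fintype β] [Fintype γ] [Fintype δ]
    (S : Ω → α) (T : Ω → β) (V : Ω → γ) (R : Ω → δ) :
    H p (fun ω => (S ω, T ω, V ω, R ω)) = H p (fun ω => (S ω, V ω, T ω, R ω)) := by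
  exact H_comp_equiv ⟨fun t => (t.1, t.2.2.1, t.2.1, t.2.2.2),
    fun t => (t.1, t.2.2.1, t.2.1, t.2.2.2), fun t => rfl, fun t => rfl⟩
    (fun ω => (S ω, V ω, T ω, R ω))

end Lemmas

section CMILemmas

variable {p : Ω → ℝ} {α β γ : Type*} [Fintype α] [Fintype β] [Fintype γ]
variable (X : Ω → α) (Y : Ω → β) (Z : Ω → γ)

lemma marg_XZ (x : α) (z : γ) :
    prb p (fun ω => (X ω, Z ω)) (x, z) = ∑ y, prb p (fun ω => (X ω, Y ω, Z ω)) (x, y, z) := by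
  rw [prb_eq_sum_prb (fun ω => (X ω, Z ω)) Y (x, z)]
  exact Finset.sum_congr rfl fun y _ =>
    prb_congr fun ω => by simp [Prod.ext_iff]; tauto

lemma marg_YZ (y : β) (z : γ) :
    prb p (fun ω => (Y ω, Z ω)) (y, z) = ∑ x, prb p (fun ω => (X ω, Y ω, Z ω)) (x, y, z) := by
  rw [prb_eq_sum_prb (fun ω => (Y ω, Z ω)) X (y, z)]
  exact Finset.sum_congr rfl fun x _ =>
    prb_congr fun ω => by simp [Prod.ext_iff]; tauto

lemma marg_Z (z : γ) :
    prb p Z z = ∑ x, ∑ y, prb p (fun ω => (X ω, Y ω, Z ω)) (x, y, z) := by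
  rw [prb_eq_sum_prb Z (fun ω => (X ω, Y ω)) z, Fintype.sum_prod_type]
  exact Finset.sum_congr rfl fun x _ => Finset.sum_congr rfl fun y _ =>
    prb_congr fun ω => by simp [Prod.ext_iff]; tauto

lemma H_pair_expand {δ ε : Type*} [Fintype δ] [Fintype ε] (S : Ω → δ) (T : Ω → ε) :
    (H p fun ω => (S ω, T ω)) = ∑ s, ∑ t, Real.negMulLog (prb p (fun ω => (S ω, T ω)) (s, t)) := by
  unfold H; rw [Fintype.sum_prod_type]

lemma CMI_eq_sum :
    CMI p X Y Z = ∑ x, ∑ y, ∑ z,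
      prb p (fun ω => (X ω, Y ω, Z ω)) (x, y, z) *
        (Real.log (prb p (fun ω => (X ω, Y ω, Z ω)) (x, y, z))
          + Real.log (prb p Z z)
          - Real.log (prb p (fun ω => (X ω, Z ω)) (x, z))
          - Real.log (prb p (fun ω => (Y ω, Z ω)) (y, z))) := by
  set F : α → β → γ → ℝ := fun x y z => prb p (fun ω => (X ω, Y ω, Z ω)) (x, y, z) with hF
  have hXZ : (H p fun ω => (X ω, Z ω)) = ∑ x, ∑ y, ∑ z,
      -(F x y z * Real.log (prb p (fun ω => (X ω, Z ω)) (x, z))) := by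
    rw [H_pair_expand]
    refine Finset.sum_congr rfl fun x _ => ?_
    rw [Finset.sum_comm]
    refine Finset.sum_congr rfl fun z _ => ?_
    rw [Real.negMulLog_eq_neg]
    dsimp only
    rw [marg_XZ X Y Z x z, Finset.sum_mul, ← Finset.sum_neg_distrib]
  have hYZ : (H p fun ω => (Y ω, Z ω)) = ∑ x, ∑ y, ∑ z,
      -(F x y z * Real.log (prb p (fun ω => (Y ω, Z ω)) (y, z))) := by
    calc (H p fun ω => (Y ω, Z ω))
        = ∑ y, ∑ z, ∑ x, -(F x y z * Real.log (prb p (fun ω => (Y ω, Z ω)) (y, z))) := by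
          rw [H_pair_expand]
          refine Finset.sum_congr rfl fun y _ => Finset.sum_congr rfl fun z _ => ?_
          simp only [Real.negMulLog_eq_neg]
          rw [marg_YZ X Y Z y z, Finset.sum_mul, ← Finset.sum_neg_distrib]
      _ = ∑ y, ∑ x, ∑ z, -(F x y z * Real.log (prb p (fun ω => (Y ω, Z ω)) (y, z))) :=
          Finset.sum_congr rfl fun y _ => Finset.sum_comm
      _ = ∑ x, ∑ y, ∑ z, -(F x y z * Real.log (prb p (fun ω => (Y ω, Z ω)) (y, z))) :=
          Finset.sum_comm
  have hZ : (H p Z) = ∑ x, ∑ y, ∑ z, -(F x y z * Real.log (prb p Z z)) := by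
    calc (H p Z)
        = ∑ z, ∑ x, ∑ y, -(F x y z * Real.log (prb p Z z)) := by
          unfold H
          refine Finset.sum_congr rfl fun z _ => ?_
          simp only [Real.negMulLog_eq_neg]
          rw [marg_Z X Y Z z, Finset.sum_mul, ← Finset.sum_neg_distrib]
          refine Finset.sum_congr rfl fun x _ => ?_
          rw [Finset.sum_mul, ← Finset.sum_neg_distrib]
      _ = ∑ x, ∑ z, ∑ y, -(F x y z * Real.log (prb p Z z)) := Finset.sum_comm
      _ = ∑ x, ∑ y, ∑ z, -(F x y z * Real.log (prb p Z z)) :=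
          Finset.sum_congr rfl fun x _ => Finset.sum_comm
  have hXYZ : (H p fun ω => (X ω, Y ω, Z ω)) = ∑ x, ∑ y, ∑ z, Real.negMulLog (F x y z) := by
    unfold H
    simp only [Fintype.sum_prod_type]
    rfl
  rw [CMI, hXZ, hYZ, hXYZ, hZ]
  simp only [← Finset.sum_sub_distrib, ← Finset.sum_add_distrib]
  refine Finset.sum_congr rfl fun x _ => Finset.sum_congr rfl fun y _ =>
    Finset.sum_congr rfl fun z _ => ?_
  simp only [Real.negMulLog_eq_neg]
  ring


lemma sum3_rot (f : α → β → γ → ℝ) :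
    ∑ x, ∑ y, ∑ z, f x y z = ∑ z, ∑ x, ∑ y, f x y z := by
  calc ∑ x, ∑ y, ∑ z, f x y z = ∑ x, ∑ z, ∑ y, f x y z :=
        Finset.sum_congr rfl fun x _ => Finset.sum_comm
    _ = ∑ z, ∑ x, ∑ y, f x y z := Finset.sum_comm

lemma marg_Z_fromXZ (z : γ) :
    prb p Z z = ∑ x, prb p (fun ω => (X ω, Z ω)) (x, z) := by
  rw [prb_eq_sum_prb Z X z]
  exact Finset.sum_congr rfl fun x _ => prb_congr fun ω => by simp [Prod.ext_iff]; tauto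

lemma marg_Z_fromYZ (z : γ) :
    prb p Z z = ∑ y, prb p (fun ω => (Y ω, Z ω)) (y, z) := by
  rw [prb_eq_sum_prb Z Y z]
  exact Finset.sum_congr rfl fun y _ => prb_congr fun ω => by simp [Prod.ext_iff]; tauto

lemma CMI_nonneg (hp : IsPMF p) : 0 ≤ CMI p X Y Z := by
  have hp0 := hp.1
  rw [CMI_eq_sum]
  set F : α → β → γ → ℝ := fun x y z => prb p (fun ω => (X ω, Y ω, Z ω)) (x, y, z) with hF
  set Q : α → β → γ → ℝ := fun x y z => if prb p Z z = 0 then 0 else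
      prb p (fun ω => (X ω, Z ω)) (x, z) * prb p (fun ω => (Y ω, Z ω)) (y, z) / prb p Z z
      with hQ
  have hFn : ∀ x y z, 0 ≤ F x y z := fun x y z => prb_nonneg hp0 _ _
  have hQn : ∀ x y z, 0 ≤ Q x y z := by
    intro x y z
    rw [hQ]
    dsimp only
    split_ifs with h
    · exact le_refl 0
    · exact div_nonneg (mul_nonneg (prb_nonneg hp0 _ _) (prb_nonneg hp0 _ _)) (prb_nonneg hp0 _ _)
  have key : ∀ x y z, F x y z - Q x y z ≤ F x y z *
      (Real.log (F x y z) + Real.log (prb p Z z)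
        - Real.log (prb p (fun ω => (X ω, Z ω)) (x, z))
        - Real.log (prb p (fun ω => (Y ω, Z ω)) (y, z))) := by
    intro x y z
    by_cases hF0 : F x y z = 0
    · rw [hF0, zero_mul, zero_sub, neg_nonpos]
      exact hQn x y z
    have hFpos : 0 < F x y z := lt_of_le_of_ne (hFn x y z) (Ne.symm hF0)
    have hxz : F x y z ≤ prb p (fun ω => (X ω, Z ω)) (x, z) := by
      rw [marg_XZ X Y Z x z]
      exact Finset.single_le_sum (f := fun y => prb p (fun ω => (X ω, Y ω, Z ω)) (x, y, z))
        (fun _ _ => prb_nonneg hp0 _ _) (Finset.mem_univ y)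
    have hyz : F x y z ≤ prb p (fun ω => (Y ω, Z ω)) (y, z) := by
      rw [marg_YZ X Y Z y z]
      exact Finset.single_le_sum (f := fun x => prb p (fun ω => (X ω, Y ω, Z ω)) (x, y, z))
        (fun _ _ => prb_nonneg hp0 _ _) (Finset.mem_univ x)
    have hz : F x y z ≤ prb p Z z := by
      rw [marg_Z_fromXZ X Z z]
      exact le_trans hxz
        (Finset.single_le_sum (f := fun x => prb p (fun ω => (X ω, Z ω)) (x, z))
          (fun _ _ => prb_nonneg hp0 _ _) (Finset.mem_univ x))
    have hxzpos : 0 < prb p (fun ω => (X ω, Z ω)) (x, z) := lt_of_lt_of_le hFpos hxz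
    have hyzpos : 0 < prb p (fun ω => (Y ω, Z ω)) (y, z) := lt_of_lt_of_le hFpos hyz
    have hzpos : 0 < prb p Z z := lt_of_lt_of_le hFpos hz
    have hQval : Q x y z = prb p (fun ω => (X ω, Z ω)) (x, z)
        * prb p (fun ω => (Y ω, Z ω)) (y, z) / prb p Z z := by
      rw [hQ]; dsimp only; rw [if_neg hzpos.ne']
    have hQpos : 0 < Q x y z := by
      rw [hQval]; positivity
    have hlog : Real.log (F x y z) + Real.log (prb p Z z)
        - Real.log (prb p (fun ω => (X ω, Z ω)) (x, z))
        - Real.log (prb p (fun ω => (Y ω, Z ω)) (y, z))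
        = Real.log (F x y z / Q x y z) := by
      rw [Real.log_div hF0 hQpos.ne', hQval, Real.log_div (by positivity) hzpos.ne',
        Real.log_mul hxzpos.ne' hyzpos.ne']
      ring
    rw [hlog]
    have h1 : Real.log (Q x y z / F x y z) ≤ Q x y z / F x y z - 1 :=
      Real.log_le_sub_one_of_pos (div_pos hQpos hFpos)
    have h2 : Real.log (F x y z / Q x y z) = - Real.log (Q x y z / F x y z) := by
      rw [Real.log_div hF0 hQpos.ne', Real.log_div hQpos.ne' hF0]; ring
    have h3 : F x y z * (Q x y z / F x y z) = Q x y z := by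
      field_simp
    rw [h2]
    nlinarith [hFpos]
  have hsum_le : ∑ x, ∑ y, ∑ z, (F x y z - Q x y z) ≤ ∑ x, ∑ y, ∑ z, F x y z *
      (Real.log (F x y z) + Real.log (prb p Z z)
        - Real.log (prb p (fun ω => (X ω, Z ω)) (x, z))
        - Real.log (prb p (fun ω => (Y ω, Z ω)) (y, z))) :=
    Finset.sum_le_sum fun x _ => Finset.sum_le_sum fun y _ =>
      Finset.sum_le_sum fun z _ => key x y z
  have hsF : ∑ x, ∑ y, ∑ z, F x y z = 1 := by
    rw [sum3_rot]
    have : ∀ z, (∑ x, ∑ y, F x y z) = prb p Z z := fun z => (marg_Z X Y Z z).symm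
    rw [Finset.sum_congr rfl fun z _ => this z, sum_prb, hp.2]
  have hsQ : ∑ x, ∑ y, ∑ z, Q x y z = 1 := by
    rw [sum3_rot]
    have hzq : ∀ z, (∑ x, ∑ y, Q x y z) = prb p Z z := by
      intro z
      by_cases h : prb p Z z = 0
      · rw [h]
        refine Finset.sum_eq_zero fun x _ => Finset.sum_eq_zero fun y _ => ?_
        rw [hQ]; dsimp only; rw [if_pos h]
      · have : ∀ x y, Q x y z = prb p (fun ω => (X ω, Z ω)) (x, z)
            * prb p (fun ω => (Y ω, Z ω)) (y, z) / prb p Z z := by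
          intro x y; rw [hQ]; dsimp only; rw [if_neg h]
        simp only [this]
        rw [show (∑ x, ∑ y, prb p (fun ω => (X ω, Z ω)) (x, z)
            * prb p (fun ω => (Y ω, Z ω)) (y, z) / prb p Z z)
            = (∑ x, prb p (fun ω => (X ω, Z ω)) (x, z))
              * (∑ y, prb p (fun ω => (Y ω, Z ω)) (y, z)) / prb p Z z by
          rw [Finset.sum_mul, Finset.sum_div]
          exact Finset.sum_congr rfl fun x _ => by rw [Finset.mul_sum, Finset.sum_div]]
        rw [← marg_Z_fromXZ X Z z, ← marg_Z_fromYZ Y Z z]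
        field_simp
    rw [Finset.sum_congr rfl fun z _ => hzq z, sum_prb, hp.2]
  have : ∑ x, ∑ y, ∑ z, (F x y z - Q x y z) = 0 := by
    simp only [Finset.sum_sub_distrib]
    rw [hsF, hsQ]
    ring
  linarith [hsum_le, this]

lemma CMI_eq_zero (hp0 : ∀ ω, 0 ≤ p ω)
    (hind : ∀ x y z, prb p (fun ω => (X ω, Y ω, Z ω)) (x, y, z) * prb p Z z
      = prb p (fun ω => (X ω, Z ω)) (x, z) * prb p (fun ω => (Y ω, Z ω)) (y, z)) :
    CMI p X Y Z = 0 := by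
  rw [CMI_eq_sum]
  refine Finset.sum_eq_zero fun x _ => Finset.sum_eq_zero fun y _ =>
    Finset.sum_eq_zero fun z _ => ?_
  by_cases hF0 : prb p (fun ω => (X ω, Y ω, Z ω)) (x, y, z) = 0
  · rw [hF0, zero_mul]
  have hFpos : 0 < prb p (fun ω => (X ω, Y ω, Z ω)) (x, y, z) :=
    lt_of_le_of_ne (prb_nonneg hp0 _ _) (Ne.symm hF0)
  have hxz : prb p (fun ω => (X ω, Y ω, Z ω)) (x, y, z)
      ≤ prb p (fun ω => (X ω, Z ω)) (x, z) := by
    rw [marg_XZ X Y Z x z]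
    exact Finset.single_le_sum (f := fun y => prb p (fun ω => (X ω, Y ω, Z ω)) (x, y, z))
      (fun _ _ => prb_nonneg hp0 _ _) (Finset.mem_univ y)
  have hyz : prb p (fun ω => (X ω, Y ω, Z ω)) (x, y, z)
      ≤ prb p (fun ω => (Y ω, Z ω)) (y, z) := by
    rw [marg_YZ X Y Z y z]
    exact Finset.single_le_sum (f := fun x => prb p (fun ω => (X ω, Y ω, Z ω)) (x, y, z))
      (fun _ _ => prb_nonneg hp0 _ _) (Finset.mem_univ x)
  have hz : prb p (fun ω => (X ω, Y ω, Z ω)) (x, y, z) ≤ prb p Z z := by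
    rw [marg_Z_fromXZ X Z z]
    exact le_trans hxz
      (Finset.single_le_sum (f := fun x => prb p (fun ω => (X ω, Z ω)) (x, z))
        (fun _ _ => prb_nonneg hp0 _ _) (Finset.mem_univ x))
  have hxzpos := lt_of_lt_of_le hFpos hxz
  have hyzpos := lt_of_lt_of_le hFpos hyz
  have hzpos := lt_of_lt_of_le hFpos hz
  have := congrArg Real.log (hind x y z)
  rw [Real.log_mul hF0 hzpos.ne', Real.log_mul hxzpos.ne' hyzpos.ne'] at this
  rw [show Real.log (prb p (fun ω => (X ω, Y ω, Z ω)) (x, y, z)) + Real.log (prb p Z z)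
      - Real.log (prb p (fun ω => (X ω, Z ω)) (x, z))
      - Real.log (prb p (fun ω => (Y ω, Z ω)) (y, z)) = 0 by linarith, mul_zero]

end CMILemmas


section Markov

variable {p : Ω → ℝ}

lemma prb_comp_left {α α' β} [Fintype α] (A : Ω → α) (B : Ω → β) (f : α → α') (a' : α') (b : β) :
    prb p (fun ω => (f (A ω), B ω)) (a', b)
      = ∑ a, if f a = a' then prb p (fun ω => (A ω, B ω)) (a, b) else 0 := by
  refine Eq.symm ?_
  calc ∑ a, (if f a = a' then prb p (fun ω => (A ω, B ω)) (a, b) else 0)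
      = ∑ a, ∑ ω, (if f a = a' then pInd p (fun ω => (A ω, B ω)) (a, b) ω else 0) := by
        refine Finset.sum_congr rfl fun a _ => ?_
        split_ifs with h
        · rfl
        · exact Finset.sum_const_zero.symm
    _ = ∑ ω, ∑ a, (if f a = a' then pInd p (fun ω => (A ω, B ω)) (a, b) ω else 0) :=
        Finset.sum_comm
    _ = ∑ ω, pInd p (fun ω => (f (A ω), B ω)) (a', b) ω := by
        refine Finset.sum_congr rfl fun ω _ => ?_
        have key : ∀ a, (if f a = a' then pInd p (fun ω => (A ω, B ω)) (a, b) ω else 0)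
            = if a = A ω then pInd p (fun ω => (f (A ω), B ω)) (a', b) ω else 0 := by
          intro a
          by_cases h1 : a = A ω
          · subst h1
            by_cases h2 : f (A ω) = a' <;> by_cases h3 : B ω = b <;>
              simp [pInd, Prod.ext_iff, h2, h3]
          · have h1' : ¬(A ω = a) := fun h => h1 h.symm
            simp [pInd, Prod.ext_iff, h1, h1']
        rw [Finset.sum_congr rfl fun a _ => key a]
        rw [Finset.sum_eq_single (A ω) (fun a _ hne => if_neg hne)
          (fun h => absurd (Finset.mem_univ _) h)]
        rw [if_pos rfl]
    _ = prb p (fun ω => (f (A ω), B ω)) (a', b) := rfl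

lemma prb_comp_right {β γ γ'} [Fintype γ] (B : Ω → β) (C : Ω → γ) (g : γ → γ') (b : β) (c' : γ') :
    prb p (fun ω => (B ω, g (C ω))) (b, c')
      = ∑ c, if g c = c' then prb p (fun ω => (B ω, C ω)) (b, c) else 0 := by
  refine Eq.symm ?_
  calc ∑ c, (if g c = c' then prb p (fun ω => (B ω, C ω)) (b, c) else 0)
      = ∑ c, ∑ ω, (if g c = c' then pInd p (fun ω => (B ω, C ω)) (b, c) ω else 0) := by
        refine Finset.sum_congr rfl fun c _ => ?_
        split_ifs with h
        · rfl
        · exact Finset.sum_const_zero.symm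
    _ = ∑ ω, ∑ c, (if g c = c' then pInd p (fun ω => (B ω, C ω)) (b, c) ω else 0) :=
        Finset.sum_comm
    _ = ∑ ω, pInd p (fun ω => (B ω, g (C ω))) (b, c') ω := by
        refine Finset.sum_congr rfl fun ω _ => ?_
        have key : ∀ c, (if g c = c' then pInd p (fun ω => (B ω, C ω)) (b, c) ω else 0)
            = if c = C ω then pInd p (fun ω => (B ω, g (C ω))) (b, c') ω else 0 := by
          intro c
          by_cases h1 : c = C ω
          · subst h1
            by_cases h2 : g (C ω) = c' <;> by_cases h3 : B ω = b <;>
              simp [pInd, Prod.ext_iff, h2, h3]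
          · have h1' : ¬(C ω = c) := fun h => h1 h.symm
            simp [pInd, Prod.ext_iff, h1, h1']
        rw [Finset.sum_congr rfl fun c _ => key c]
        rw [Finset.sum_eq_single (C ω) (fun c _ hne => if_neg hne)
          (fun h => absurd (Finset.mem_univ _) h)]
        rw [if_pos rfl]
    _ = prb p (fun ω => (B ω, g (C ω))) (b, c') := rfl

lemma prb_comp_both {α β γ α' γ'} [Fintype α] [Fintype γ]
    (A : Ω → α) (B : Ω → β) (C : Ω → γ) (f : α → α') (g : γ → γ') (a' : α') (b : β) (c' : γ') :
    prb p (fun ω => (f (A ω), B ω, g (C ω))) (a', b, c')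
      = ∑ a, ∑ c, if f a = a' ∧ g c = c'
          then prb p (fun ω => (A ω, B ω, C ω)) (a, b, c) else 0 := by
  refine Eq.symm ?_
  calc ∑ a, ∑ c, (if f a = a' ∧ g c = c'
          then prb p (fun ω => (A ω, B ω, C ω)) (a, b, c) else 0)
      = ∑ a, ∑ c, ∑ ω, (if f a = a' ∧ g c = c'
          then pInd p (fun ω => (A ω, B ω, C ω)) (a, b, c) ω else 0) := by
        refine Finset.sum_congr rfl fun a _ => Finset.sum_congr rfl fun c _ => ?_
        split_ifs with h
        · rfl
        · exact Finset.sum_const_zero.symm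
    _ = ∑ ω, ∑ a, ∑ c, (if f a = a' ∧ g c = c'
          then pInd p (fun ω => (A ω, B ω, C ω)) (a, b, c) ω else 0) :=
        sum3_rot _
    _ = ∑ ω, pInd p (fun ω => (f (A ω), B ω, g (C ω))) (a', b, c') ω := by
        refine Finset.sum_congr rfl fun ω _ => ?_
        have key : ∀ a, (∑ c, if f a = a' ∧ g c = c'
              then pInd p (fun ω => (A ω, B ω, C ω)) (a, b, c) ω else 0)
            = if a = A ω
                then pInd p (fun ω => (f (A ω), B ω, g (C ω))) (a', b, c') ω else 0 := by
          intro a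
          have inner : ∀ c, (if f a = a' ∧ g c = c'
                then pInd p (fun ω => (A ω, B ω, C ω)) (a, b, c) ω else 0)
              = if c = C ω then (if a = A ω then
                  pInd p (fun ω => (f (A ω), B ω, g (C ω))) (a', b, c') ω else 0) else 0 := by
            intro c
            by_cases h1 : c = C ω
            · subst h1
              by_cases h2 : a = A ω
              · subst h2
                by_cases h3 : f (A ω) = a' <;> by_cases h4 : g (C ω) = c' <;>
                  by_cases h5 : B ω = b <;> simp [pInd, Prod.ext_iff, h3, h4, h5]
              · have h2' : ¬(A ω = a) := fun h => h2 h.symm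
                simp [pInd, Prod.ext_iff, h2, h2']
            · have h1' : ¬(C ω = c) := fun h => h1 h.symm
              simp [pInd, Prod.ext_iff, h1, h1']
          rw [Finset.sum_congr rfl fun c _ => inner c]
          rw [Finset.sum_eq_single (C ω) (fun c _ hne => if_neg hne)
            (fun h => absurd (Finset.mem_univ _) h)]
          rw [if_pos rfl]
        rw [Finset.sum_congr rfl fun a _ => key a]
        rw [Finset.sum_eq_single (A ω) (fun a _ hne => if_neg hne)
          (fun h => absurd (Finset.mem_univ _) h)]
        rw [if_pos rfl]
    _ = prb p (fun ω => (f (A ω), B ω, g (C ω))) (a', b, c') := rfl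

lemma markov_comp {α β γ α' γ'} [Fintype α] [Fintype β] [Fintype γ]
    {A : Ω → α} {B : Ω → β} {C : Ω → γ}
    (hM : MarkovTriple p A B C) (f : α → α') (g : γ → γ') :
    MarkovTriple p (fun ω => f (A ω)) B (fun ω => g (C ω)) := by
  intro a' b c'
  show prb p (fun ω => (f (A ω), B ω, g (C ω))) (a', b, c') * prb p B b
    = prb p (fun ω => (f (A ω), B ω)) (a', b) * prb p (fun ω => (B ω, g (C ω))) (b, c')
  rw [prb_comp_both A B C f g a' b c', prb_comp_left A B f a' b, prb_comp_right B C g b c']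
  rw [Finset.sum_mul, Finset.sum_mul]
  refine Finset.sum_congr rfl fun a _ => ?_
  rw [Finset.sum_mul, Finset.mul_sum]
  refine Finset.sum_congr rfl fun c _ => ?_
  by_cases h1 : f a = a' <;> by_cases h2 : g c = c'
  · simpa [h1, h2] using hM a b c
  · simp [h1, h2]
  · simp [h1, h2]
  · simp [h1, h2]

lemma markov_condIndep {α β γ δ} [Fintype α] [Fintype β] [Fintype γ] [Fintype δ]
    (hp0 : ∀ ω, 0 ≤ p ω) {A : Ω → α} {W : Ω → δ} {B : Ω → β} {C : Ω → γ}
    (hM : MarkovTriple p (fun ω => (A ω, W ω)) B C) :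
    ∀ (a : α) (c : γ) (z : β × δ),
      prb p (fun ω => (A ω, C ω, (B ω, W ω))) (a, c, z)
          * prb p (fun ω => (B ω, W ω)) z
        = prb p (fun ω => (A ω, (B ω, W ω))) (a, z)
          * prb p (fun ω => (C ω, (B ω, W ω))) (c, z) := by
  rintro a c ⟨b, w⟩
  have h1 : prb p (fun ω => ((A ω, W ω), B ω, C ω)) ((a, w), b, c) * prb p B b
      = prb p (fun ω => ((A ω, W ω), B ω)) ((a, w), b)
        * prb p (fun ω => (B ω, C ω)) (b, c) := hM (a, w) b c
  have h2 : prb p (fun ω => (W ω, B ω, C ω)) (w, b, c) * prb p B b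
      = prb p (fun ω => (W ω, B ω)) (w, b) * prb p (fun ω => (B ω, C ω)) (b, c) :=
    (markov_comp hM Prod.snd id) w b c
  have g1 : prb p (fun ω => (A ω, C ω, (B ω, W ω))) (a, c, (b, w))
      = prb p (fun ω => ((A ω, W ω), B ω, C ω)) ((a, w), b, c) :=
    prb_congr fun ω => by simp [Prod.ext_iff]; tauto
  have g2 : prb p (fun ω => (B ω, W ω)) (b, w) = prb p (fun ω => (W ω, B ω)) (w, b) :=
    prb_congr fun ω => by simp [Prod.ext_iff]; tauto
  have g3 : prb p (fun ω => (A ω, (B ω, W ω))) (a, (b, w))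
      = prb p (fun ω => ((A ω, W ω), B ω)) ((a, w), b) :=
    prb_congr fun ω => by simp [Prod.ext_iff]; tauto
  have g4 : prb p (fun ω => (C ω, (B ω, W ω))) (c, (b, w))
      = prb p (fun ω => (W ω, B ω, C ω)) (w, b, c) :=
    prb_congr fun ω => by simp [Prod.ext_iff]; tauto
  rw [g1, g2, g3, g4]
  by_cases hPB : prb p B b = 0
  · have hWB0 : prb p (fun ω => (W ω, B ω)) (w, b) = 0 :=
      le_antisymm (hPB ▸ prb_pair_le_right hp0 W B w b) (prb_nonneg hp0 _ _)
    have hWBC0 : prb p (fun ω => (W ω, B ω, C ω)) (w, b, c) = 0 := by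
      refine le_antisymm ?_ (prb_nonneg hp0 _ _)
      calc prb p (fun ω => (W ω, B ω, C ω)) (w, b, c)
          ≤ prb p (fun ω => (B ω, C ω)) (b, c) :=
            prb_pair_le_right hp0 W (fun ω => (B ω, C ω)) w (b, c)
        _ ≤ prb p B b := prb_pair_le_left hp0 B C b c
        _ = 0 := hPB
    rw [hWB0, hWBC0, mul_zero, mul_zero]
  · refine mul_right_cancel₀ hPB ?_
    linear_combination prb p (fun ω => (W ω, B ω)) (w, b) * h1
      - prb p (fun ω => ((A ω, W ω), B ω)) ((a, w), b) * h2

lemma CMI_markov_zero {α β γ δ} [Fintype α] [Fintype β] [Fintype γ] [Fintype δ]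
    (hp0 : ∀ ω, 0 ≤ p ω) {A : Ω → α} {W : Ω → δ} {B : Ω → β} {C : Ω → γ}
    (hM : MarkovTriple p (fun ω => (A ω, W ω)) B C) :
    CMI p A C (fun ω => (B ω, W ω)) = 0 := by
  refine CMI_eq_zero A C (fun ω => (B ω, W ω)) hp0 ?_
  intro x y z
  exact markov_condIndep hp0 hM x y z

lemma DPI_cond {α β γ δ} [Fintype α] [Fintype β] [Fintype γ] [Fintype δ]
    (hp : IsPMF p) {A : Ω → α} {W : Ω → δ} {B : Ω → β} {C : Ω → γ}
    (hM : MarkovTriple p (fun ω => (A ω, W ω)) B C) :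
    CMI p A C W ≤ CMI p B C W := by
  have h0 : CMI p A C (fun ω => (B ω, W ω)) = 0 := CMI_markov_zero hp.1 hM
  have h1 : 0 ≤ CMI p B C (fun ω => (A ω, W ω)) := CMI_nonneg B C _ hp
  have e1 : H p (fun ω => (B ω, (A ω, W ω))) = H p (fun ω => (A ω, (B ω, W ω))) :=
    H_perm3 B A W
  have e2 : H p (fun ω => (C ω, (A ω, W ω))) = H p (fun ω => (A ω, (C ω, W ω))) :=
    H_perm3 C A W
  have e3 : H p (fun ω => (B ω, (C ω, (A ω, W ω)))) = H p (fun ω => (A ω, (C ω, (B ω, W ω)))) :=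
    H_perm4_13 B C A W
  have e4 : H p (fun ω => (C ω, (B ω, W ω))) = H p (fun ω => (B ω, (C ω, W ω))) :=
    H_perm3 C B W
  simp only [CMI] at h0 h1 ⊢
  linarith [e1, e2, e3, e4]

lemma DPI_cond2 {α β γ δ} [Fintype α] [Fintype β] [Fintype γ] [Fintype δ]
    (hp : IsPMF p) {A : Ω → α} {W : Ω → δ} {B : Ω → β} {C : Ω → γ}
    (hM : MarkovTriple p (fun ω => (A ω, W ω)) B C) :
    CMI p A C W ≤ CMI p A B W := by
  have h0 : CMI p A C (fun ω => (B ω, W ω)) = 0 := CMI_markov_zero hp.1 hM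
  have h1 : 0 ≤ CMI p A B (fun ω => (C ω, W ω)) := CMI_nonneg A B _ hp
  have e4 : H p (fun ω => (C ω, (B ω, W ω))) = H p (fun ω => (B ω, (C ω, W ω))) :=
    H_perm3 C B W
  have e5 : H p (fun ω => (A ω, (C ω, (B ω, W ω)))) = H p (fun ω => (A ω, (B ω, (C ω, W ω)))) :=
    H_perm4_23 A C B W
  simp only [CMI] at h0 h1 ⊢
  linarith [e4, e5]

end Markov

section Params

variable {K : ℕ} {𝒰 : Fin (K - 1) → Type*} [∀ i, Fintype (𝒰 i)]
  {𝒳 : Type*} [Fintype 𝒳] {𝒴 : Fin K → Type*} [∀ k, Fintype (𝒴 k)]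

/-- `a_1 = I(U_1;Y_1)` and `a_j = I(U_j;Y_j|U_{j-1})` for `2 ≤ j ≤ K`, with `U_K := X`;
indices are `1`-based (value `0` outside `1 ≤ j ≤ K`). -/
def aT (p : Ω → ℝ) (U : (i : Fin (K - 1)) → Ω → 𝒰 i) (X : Ω → 𝒳)
    (Y : (k : Fin K) → Ω → 𝒴 k) (j : ℕ) : ℝ :=
  if h : 2 ≤ K ∧ 1 ≤ j ∧ j ≤ K then
    if h1 : j = 1 then MI p (U ⟨0, by omega⟩) (Y ⟨0, by omega⟩)
    else if hK : j = K then
      CMI p X (Y ⟨j - 1, by omega⟩) (U ⟨j - 2, by omega⟩)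
    else CMI p (U ⟨j - 1, by omega⟩) (Y ⟨j - 1, by omega⟩) (U ⟨j - 2, by omega⟩)
  else 0

/-- `b_{j,l} = I(U_j; Y_{l-2} | U_{l-2})` for `3 ≤ l ≤ K + 1`, `l - 1 ≤ j ≤ K`, with
`U_K := X`; indices are `1`-based (value `0` outside this range). -/
def bT (p : Ω → ℝ) (U : (i : Fin (K - 1)) → Ω → 𝒰 i) (X : Ω → 𝒳)
    (Y : (k : Fin K) → Ω → 𝒴 k) (j l : ℕ) : ℝ :=
  if h : 3 ≤ l ∧ l ≤ K + 1 ∧ l - 1 ≤ j ∧ j ≤ K then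
    if hK : j = K then CMI p X (Y ⟨l - 3, by omega⟩) (U ⟨l - 3, by omega⟩)
    else CMI p (U ⟨j - 1, by omega⟩) (Y ⟨l - 3, by omega⟩) (U ⟨l - 3, by omega⟩)
  else 0

end Params

section ParamFacts

variable {K : ℕ} {𝒰 : Fin (K - 1) → Type*} [∀ i, Fintype (𝒰 i)]
  {𝒳 : Type*} [Fintype 𝒳] {𝒴 : Fin K → Type*} [∀ k, Fintype (𝒴 k)]
  {p : Ω → ℝ} (U : (i : Fin (K - 1)) → Ω → 𝒰 i) (X : Ω → 𝒳) (Y : (k : Fin K) → Ω → 𝒴 k)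

lemma bT_nonneg (hp : IsPMF p) (j l : ℕ) : 0 ≤ bT p U X Y j l := by
  unfold bT
  split_ifs with h1 h2
  · exact CMI_nonneg _ _ _ hp
  · exact CMI_nonneg _ _ _ hp
  · exact le_refl 0

lemma bT_mono (hK : 4 ≤ K) (hp : IsPMF p)
    (hchainU : ∀ j : Fin (K - 1),
      MarkovTriple p (fun ω => fun i : {i : Fin (K - 1) // i < j} => U i.1 ω) (U j)
        (fun ω => ((fun i : {i : Fin (K - 1) // j < i} => U i.1 ω), X ω,
          fun k : Fin K => Y k ω)))
    (hchainX : MarkovTriple p (fun ω => fun i : Fin (K - 1) => U i ω) X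
      (fun ω => fun k : Fin K => Y k ω))
    {k l : ℕ} (hk3 : 3 ≤ k) (hkK : k ≤ K - 1) (hl3 : 3 ≤ l) (hlk : l ≤ k + 1) :
    bT p U X Y k l ≤ bT p U X Y (k + 1) l := by
  have hc1 : 3 ≤ l ∧ l ≤ K + 1 ∧ l - 1 ≤ k ∧ k ≤ K := by omega
  have hc2 : 3 ≤ l ∧ l ≤ K + 1 ∧ l - 1 ≤ k + 1 ∧ k + 1 ≤ K := by omega
  unfold bT
  rw [dif_pos hc1, dif_neg (show ¬ k = K by omega), dif_pos hc2]
  by_cases hkK' : k + 1 = K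
  · rw [dif_pos hkK']
    refine DPI_cond hp ?_
    exact markov_comp hchainX
      (fun u => (u ⟨k - 1, by omega⟩, u ⟨l - 3, by omega⟩))
      (fun y => y ⟨l - 3, by omega⟩)
  · rw [dif_neg hkK']
    refine DPI_cond hp ?_
    have hkf : k < K - 1 := by omega
    exact markov_comp (hchainU ⟨k, hkf⟩)
      (fun u => (u ⟨⟨k - 1, by omega⟩, Fin.mk_lt_mk.mpr (by omega)⟩,
        u ⟨⟨l - 3, by omega⟩, Fin.mk_lt_mk.mpr (by omega)⟩))
      (fun t => t.2.2 ⟨l - 3, by omega⟩)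

lemma aT_ge_bT (hK : 4 ≤ K) (hp : IsPMF p)
    (hchainY : ∀ j : Fin K,
      MarkovTriple p
        (fun ω => ((fun i : Fin (K - 1) => U i ω), X ω,
          fun i : {i : Fin K // j < i} => Y i.1 ω))
        (Y j)
        (fun ω => fun i : {i : Fin K // i < j} => Y i.1 ω))
    {k : ℕ} (hk3 : 3 ≤ k) (hkK : k ≤ K - 1) :
    bT p U X Y k (k + 1) ≤ aT p U X Y k := by
  have hca : 2 ≤ K ∧ 1 ≤ k ∧ k ≤ K := by omega
  have hcb : 3 ≤ k + 1 ∧ k + 1 ≤ K + 1 ∧ k + 1 - 1 ≤ k ∧ k ≤ K := by omega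
  unfold aT bT
  rw [dif_pos hcb, dif_neg (show ¬ k = K by omega), dif_pos hca,
    dif_neg (show ¬ k = 1 by omega), dif_neg (show ¬ k = K by omega)]
  refine DPI_cond2 hp ?_
  exact markov_comp (hchainY ⟨k - 1, by omega⟩)
    (fun t => (t.1 ⟨k - 1, by omega⟩, t.1 ⟨k + 1 - 3, by omega⟩))
    (fun y => y ⟨⟨k + 1 - 3, by omega⟩, Fin.mk_lt_mk.mpr (by omega)⟩)

end ParamFacts

/-- `1`-based access to a `Fin K`-indexed rate tuple. -/
def oneB {K : ℕ} (R : Fin K → ℝ) (j : ℕ) : ℝ :=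
  if h : 1 ≤ j ∧ j ≤ K then R ⟨j - 1, by omega⟩ else 0


section Region

variable {K : ℕ} {𝒰 : Fin (K - 1) → Type*} [∀ i, Fintype (𝒰 i)]
  {𝒳 : Type*} [Fintype 𝒳] {𝒴 : Fin K → Type*} [∀ k, Fintype (𝒴 k)]

/-- The region `𝓡_k` appearing in the inductive Fourier–Motzkin elimination:
nonnegative tuples `(R_1,…,R_k, R_{k,2})` satisfying the stated bounds, with the
parameters instantiated as `a_j = aT …  j` and `b_{j,l} = bT … j l`.
Rates are `1`-based (`R j` for `1 ≤ j ≤ k`). -/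
def inRk (p : Ω → ℝ) (U : (i : Fin (K - 1)) → Ω → 𝒰 i) (X : Ω → 𝒳)
    (Y : (k : Fin K) → Ω → 𝒴 k) (k : ℕ) (R : ℕ → ℝ) (Rk2 : ℝ) : Prop :=
  (∀ j, 1 ≤ j → j ≤ k → 0 ≤ R j) ∧ 0 ≤ Rk2 ∧
  R 1 ≤ aT p U X Y 1 ∧
  (∀ j, 2 ≤ j → j ≤ k - 1 →
    ∑ i ∈ Finset.Icc 2 j, R i ≤ ∑ i ∈ Finset.Icc 2 j, aT p U X Y i) ∧
  ((∑ i ∈ Finset.Icc 2 k, R i) + Rk2 ≤ ∑ i ∈ Finset.Icc 2 k, aT p U X Y i) ∧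
  (∀ l j, 3 ≤ l → l ≤ j → j ≤ k - 1 →
    ∑ i ∈ Finset.Icc l j, R i ≤ (∑ i ∈ Finset.Icc (l - 1) j, aT p U X Y i)
      - bT p U X Y j l) ∧
  (∀ l, 3 ≤ l → l ≤ k + 1 →
    (∑ i ∈ Finset.Icc l k, R i) + Rk2 ≤ (∑ i ∈ Finset.Icc (l - 1) k, aT p U X Y i)
      - bT p U X Y k l)

end Region

/-- Inductive step of the Fourier–Motzkin elimination in the
achievability proof: for `3 ≤ k ≤ K - 1`, membership of `(R_1,…,R_{k+1},R_{k+1,2})`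
in `𝓡_{k+1}` is equivalent to the existence of nonnegative `R_{k,2}, R_{k+1,1}` with
`R_{k+1} = R_{k,2} + R_{k+1,1}` such that `(R_1,…,R_k,R_{k,2}) ∈ 𝓡_k` together with
the decoding and secrecy constraints of receiver `k+1`. -/
theorem fourier_motzkin_step
    {K : ℕ} (hK : 4 ≤ K)
    {Ωs : Type} [Fintype Ωs] (p : Ωs → ℝ) (hp : IsPMF p)
    {𝒰 : Fin (K - 1) → Type} [∀ i, Fintype (𝒰 i)]
    {𝒳 : Type} [Fintype 𝒳] {𝒴 : Fin K → Type} [∀ k, Fintype (𝒴 k)]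
    (U : (i : Fin (K - 1)) → Ωs → 𝒰 i) (X : Ωs → 𝒳) (Y : (k : Fin K) → Ωs → 𝒴 k)
    -- the Markov chain U₁ → ⋯ → U_{K-1} → X → Y_K → ⋯ → Y₁
    (hchainU : ∀ j : Fin (K - 1),
      MarkovTriple p (fun ω => fun i : {i : Fin (K - 1) // i < j} => U i.1 ω) (U j)
        (fun ω => ((fun i : {i : Fin (K - 1) // j < i} => U i.1 ω), X ω,
          fun k : Fin K => Y k ω)))
    (hchainX : MarkovTriple p (fun ω => fun i : Fin (K - 1) => U i ω) X
      (fun ω => fun k : Fin K => Y k ω))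
    (hchainY : ∀ j : Fin K,
      MarkovTriple p
        (fun ω => ((fun i : Fin (K - 1) => U i ω), X ω,
          fun i : {i : Fin K // j < i} => Y i.1 ω))
        (Y j)
        (fun ω => fun i : {i : Fin K // i < j} => Y i.1 ω))
    (k : ℕ) (hk3 : 3 ≤ k) (hkK : k ≤ K - 1)
    (R : ℕ → ℝ) (Rk12 : ℝ)
    (hRnn : ∀ j, 1 ≤ j → j ≤ k + 1 → 0 ≤ R j) (hRk12 : 0 ≤ Rk12) :
    inRk p U X Y (k + 1) R Rk12 ↔
      ∃ Rk2 Rk11 : ℝ, 0 ≤ Rk2 ∧ 0 ≤ Rk11 ∧ R (k + 1) = Rk2 + Rk11 ∧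
        inRk p U X Y k R Rk2 ∧
        Rk11 + Rk12 ≤ aT p U X Y (k + 1) ∧
        (∀ j, 3 ≤ j → j ≤ k + 2 →
          (∑ i ∈ Finset.Icc j (k + 1), R i) + Rk12 ≤
            (∑ i ∈ Finset.Icc (j - 1) (k + 1), aT p U X Y i) - bT p U X Y (k + 1) j) := by
  have hKk : k + 1 ≤ K := by omega
  constructor
  · intro hin
    unfold inRk at hin
    obtain ⟨hnn, h0, h1, h2, h3, h4, h5⟩ := hin
    have F1 : Rk12 ≤ aT p U X Y (k + 1) - bT p U X Y (k + 1) (k + 2) := by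
      have h := h5 (k + 2) (by omega) (by omega)
      rw [show k + 2 - 1 = k + 1 by omega] at h
      rw [Finset.Icc_eq_empty (by omega), Finset.sum_empty, Finset.Icc_self,
        Finset.sum_singleton] at h
      linarith
    have F2 : 0 ≤ bT p U X Y (k + 1) (k + 2) := bT_nonneg U X Y hp _ _
    have h3' := h3
    rw [Finset.sum_Icc_succ_top (show 2 ≤ k + 1 by omega) R,
      Finset.sum_Icc_succ_top (show 2 ≤ k + 1 by omega) (aT p U X Y)] at h3'
    have F4 := h2 k (by omega) (by omega)
    set Rk2 : ℝ := max 0 (R (k + 1) + Rk12 - aT p U X Y (k + 1)) with hRk2def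
    have hRk2le : Rk2 ≤ R (k + 1) :=
      max_le (hRnn (k + 1) (by omega) (by omega)) (by linarith)
    refine ⟨Rk2, R (k + 1) - Rk2, le_max_left _ _, by linarith, by ring, ?_, ?_, ?_⟩
    · unfold inRk
      refine ⟨fun j hj1 hj2 => hRnn j hj1 (by omega), le_max_left _ _, h1,
        fun j hj1 hj2 => h2 j hj1 (by omega), ?_,
        fun l j hl hlj hjk => h4 l j hl hlj (by omega), ?_⟩
      · have hm : Rk2 ≤ (∑ i ∈ Finset.Icc 2 k, aT p U X Y i)
            - ∑ i ∈ Finset.Icc 2 k, R i :=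
          max_le (by linarith) (by linarith)
        linarith
      · intro l hl3 hlk1
        have hsp := h5 l hl3 (by omega)
        rw [Finset.sum_Icc_succ_top (show l ≤ k + 1 by omega) R,
          Finset.sum_Icc_succ_top (show l - 1 ≤ k + 1 by omega) (aT p U X Y)] at hsp
        have hmono : bT p U X Y k l ≤ bT p U X Y (k + 1) l :=
          bT_mono U X Y hK hp hchainU hchainX hk3 hkK hl3 hlk1
        by_cases hlk : l ≤ k
        · have h4k := h4 l k hl3 hlk (by omega)
          have hm : Rk2 ≤ (∑ i ∈ Finset.Icc (l - 1) k, aT p U X Y i)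
              - bT p U X Y k l - ∑ i ∈ Finset.Icc l k, R i :=
            max_le (by linarith) (by linarith)
          linarith
        · have hlval : l = k + 1 := by omega
          subst hlval
          rw [Finset.Icc_eq_empty (show ¬ (k + 1) ≤ k by omega), Finset.sum_empty]
          rw [show k + 1 - 1 = k by omega] at hsp ⊢
          rw [Finset.Icc_self, Finset.sum_singleton] at hsp ⊢
          rw [Finset.Icc_eq_empty (show ¬ (k + 1) ≤ k by omega), Finset.sum_empty] at hsp
          have hge : bT p U X Y k (k + 1) ≤ aT p U X Y k :=
            aT_ge_bT U X Y hK hp hchainY hk3 hkK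
          have hm : Rk2 ≤ aT p U X Y k - bT p U X Y k (k + 1) :=
            max_le (by linarith) (by linarith)
          linarith
    · have := le_max_right 0 (R (k + 1) + Rk12 - aT p U X Y (k + 1))
      linarith
    · exact fun j hj1 hj2 => h5 j hj1 (by omega)
  · rintro ⟨Rk2, Rk11, hRk2, hRk11, hReq, hin, hdec, hsec⟩
    unfold inRk at hin
    obtain ⟨hnn', h0', h1', h2', h3', h4', h5'⟩ := hin
    unfold inRk
    refine ⟨fun j hj1 hj2 => hRnn j hj1 hj2, hRk12, h1', ?_, ?_, ?_,
      fun l hl1 hl2 => hsec l hl1 (by omega)⟩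
    · intro j hj1 hj2
      by_cases hjk : j ≤ k - 1
      · exact h2' j hj1 hjk
      · have : j = k := by omega
        subst this
        linarith
    · rw [Finset.sum_Icc_succ_top (show 2 ≤ k + 1 by omega) R,
        Finset.sum_Icc_succ_top (show 2 ≤ k + 1 by omega) (aT p U X Y)]
      linarith
    · intro l j hl hlj hjk
      by_cases hjk' : j ≤ k - 1
      · exact h4' l j hl hlj hjk'
      · have : j = k := by omega
        subst this
        have := h5' l hl (by omega)
        linarith

end BRSec
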